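/- Let X be an integrable real random variable that is heavy on right. Then for all t ≤ 0, E[exp(tX − (t²/2)X²)] ≤ 1. -/

import Mathlib

open MeasureTheory ProbabilityTheory Real

/-- The truncated version `T_a(x) = min(|x|, a) · sign(x)` of a real number. -/
noncomputable def truncAt (a : ℝ) (x : ℝ) : ℝ := min |x| a * Real.sign x

/-- An integrable real random variable `X` is heavy on left if `E[X] = 0` and for all `a > 0`,
`E[T_a(X)] ≤ 0`. -/
def IsHeavyOnLeft {Ω : Type*} [MeasurableSpace Ω] (μ : MeasureTheory.Measure Ω)
    (X : Ω → ℝ) : Prop :=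
  (∫ ω, X ω ∂μ) = 0 ∧ ∀ a : ℝ, 0 < a → (∫ ω, truncAt a (X ω) ∂μ) ≤ 0

/-- `X` is heavy on right if `−X` is heavy on left. -/
def IsHeavyOnRight {Ω : Type*} [MeasurableSpace Ω] (μ : MeasureTheory.Measure Ω)
    (X : Ω → ℝ) : Prop :=
  IsHeavyOnLeft μ (fun ω => -X ω)

lemma measurable_realSign : Measurable Real.sign := by
  unfold Real.sign
  exact Measurable.ite (measurableSet_lt measurable_id measurable_const)
    measurable_const (Measurable.ite (measurableSet_lt measurable_const measurable_id)
      measurable_const measurable_const)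

lemma truncAt_neg (a x : ℝ) : truncAt a (-x) = -truncAt a x := by
  simp [truncAt, Real.sign_neg]

lemma abs_truncAt_le (a x : ℝ) (ha : 0 ≤ a) : |truncAt a x| ≤ |x| := by
  rw [truncAt, abs_mul]
  have h1 : |min |x| a| ≤ |x| := by
    rw [abs_of_nonneg (le_min (abs_nonneg x) ha)]
    exact min_le_left _ _
  have h2 : |Real.sign x| ≤ 1 := by
    rcases lt_trichotomy x 0 with h | h | h
    · simp [Real.sign_of_neg h]
    · simp [h]
    · simp [Real.sign_of_pos h]
  calc |min |x| a| * |Real.sign x| ≤ |x| * 1 := mul_le_mul h1 h2 (abs_nonneg _) (abs_nonneg _)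
    _ = |x| := mul_one _

lemma sign_mul_pos (c x : ℝ) (hc : 0 < c) : Real.sign (c * x) = Real.sign x := by
  rcases lt_trichotomy x 0 with h | h | h
  · rw [Real.sign_of_neg h, Real.sign_of_neg (mul_neg_of_pos_of_neg hc h)]
  · simp [h]
  · rw [Real.sign_of_pos h, Real.sign_of_pos (mul_pos hc h)]

lemma truncAt_const_mul (a c x : ℝ) (hc : 0 < c) :
    truncAt a (c * x) = c * truncAt (a / c) x := by
  rw [truncAt, truncAt, abs_mul, abs_of_pos hc, sign_mul_pos c x hc]
  have : min (c * |x|) a = c * min |x| (a / c) := by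
    rw [mul_min_of_nonneg _ _ hc.le, mul_div_cancel₀ _ hc.ne']
  rw [this]; ring

noncomputable def trPsi (u : ℝ) : ℝ := (1 - u) * Real.exp (u - u ^ 2 / 2)
noncomputable def trRho (u : ℝ) : ℝ := (2 * u - u ^ 2) * Real.exp (u - u ^ 2 / 2)

lemma continuous_trRho : Continuous trRho := by
  unfold trRho; fun_prop

lemma trRho_nonneg {u : ℝ} (h0 : 0 ≤ u) (h1 : u ≤ 2) : 0 ≤ trRho u := by
  unfold trRho
  apply mul_nonneg _ (Real.exp_nonneg _)
  nlinarith

lemma hasDerivAt_exp_quad (u : ℝ) :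
    HasDerivAt (fun v : ℝ => Real.exp (v - v ^ 2 / 2)) (trPsi u) u := by
  have h1 : HasDerivAt (fun v : ℝ => v - v ^ 2 / 2) (1 - u) u := by
    have := ((hasDerivAt_pow 2 u).div_const 2)
    have h := (hasDerivAt_id u).fun_sub this
    refine h.congr_deriv ?_
    simp
  have := h1.exp
  unfold trPsi
  convert this using 1
  ring

lemma hasDerivAt_negPsi (u : ℝ) : HasDerivAt (fun v => -trPsi v) (trRho u) u := by
  have h1 : HasDerivAt (fun v : ℝ => (1 - v)) (-1 : ℝ) u := by
    simpa using (hasDerivAt_const u (1:ℝ)).fun_sub (hasDerivAt_id u)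
  have h2 := (h1.fun_mul (hasDerivAt_exp_quad u)).fun_neg
  unfold trPsi trRho at *
  refine h2.congr_deriv ?_
  ring

lemma hasDerivAt_F (u : ℝ) :
    HasDerivAt (fun v => -(v * trPsi v) + Real.exp (v - v ^ 2 / 2)) (trRho u * u) u := by
  have hpsi : HasDerivAt trPsi (-trRho u) u := by
    have := (hasDerivAt_negPsi u).fun_neg
    simpa using this
  have h1 := (((hasDerivAt_id u).fun_mul hpsi).fun_neg).fun_add (hasDerivAt_exp_quad u)
  refine h1.congr_deriv ?_
  unfold trPsi trRho
  simp only [id_eq]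
  ring

lemma integral_trRho_min_of_le {c : ℝ} (h0 : 0 ≤ c) (h1 : c ≤ 1) :
    ∫ u in (0:ℝ)..1, trRho u * min c u = Real.exp (c - c ^ 2 / 2) - 1 := by
  have hcont : Continuous fun u => trRho u * min c u :=
    continuous_trRho.mul (continuous_const.min continuous_id)
  have hint1 : IntervalIntegrable (fun u => trRho u * min c u) volume 0 c :=
    hcont.intervalIntegrable _ _
  have hint2 : IntervalIntegrable (fun u => trRho u * min c u) volume c 1 :=
    hcont.intervalIntegrable _ _
  rw [← intervalIntegral.integral_add_adjacent_intervals hint1 hint2]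
  have e1 : ∫ u in (0:ℝ)..c, trRho u * min c u = ∫ u in (0:ℝ)..c, trRho u * u := by
    apply intervalIntegral.integral_congr
    intro u hu
    rw [Set.uIcc_of_le h0] at hu
    simp only [min_eq_right hu.2]
  have e2 : ∫ u in c..(1:ℝ), trRho u * min c u = ∫ u in c..(1:ℝ), trRho u * c := by
    apply intervalIntegral.integral_congr
    intro u hu
    rw [Set.uIcc_of_le h1] at hu
    simp only [min_eq_left hu.1]
  rw [e1, e2]
  have v1 : ∫ u in (0:ℝ)..c, trRho u * u =
      (-(c * trPsi c) + Real.exp (c - c ^ 2 / 2)) - (-(0 * trPsi 0) + Real.exp (0 - 0 ^ 2 / 2)) := by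
    apply intervalIntegral.integral_eq_sub_of_hasDerivAt
    · intro u _; exact hasDerivAt_F u
    · exact (continuous_trRho.mul continuous_id).intervalIntegrable _ _
  have v2 : ∫ u in c..(1:ℝ), trRho u * c = ((- trPsi 1) - (- trPsi c)) * c := by
    rw [intervalIntegral.integral_mul_const]
    congr 1
    exact intervalIntegral.integral_eq_sub_of_hasDerivAt (f := fun v => -trPsi v)
      (fun u _ => hasDerivAt_negPsi u) (continuous_trRho.intervalIntegrable _ _)
  rw [v1, v2]
  unfold trPsi
  simp
  ring

lemma integral_trRho_min_of_ge {c : ℝ} (h1 : 1 ≤ c) :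
    ∫ u in (0:ℝ)..1, trRho u * min c u = Real.exp ((1:ℝ) - 1 ^ 2 / 2) - 1 := by
  have e1 : ∫ u in (0:ℝ)..1, trRho u * min c u = ∫ u in (0:ℝ)..1, trRho u * u := by
    apply intervalIntegral.integral_congr
    intro u hu
    rw [Set.uIcc_of_le (by norm_num : (0:ℝ) ≤ 1)] at hu
    simp only [min_eq_right (hu.2.trans h1)]
  rw [e1]
  have v1 : ∫ u in (0:ℝ)..1, trRho u * u =
      (-(1 * trPsi 1) + Real.exp ((1:ℝ) - 1 ^ 2 / 2)) - (-(0 * trPsi 0) + Real.exp (0 - 0 ^ 2 / 2)) :=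
    intervalIntegral.integral_eq_sub_of_hasDerivAt
      (f := fun v => -(v * trPsi v) + Real.exp (v - v ^ 2 / 2))
      (fun u _ => hasDerivAt_F u) ((continuous_trRho.mul continuous_id).intervalIntegrable _ _)
  rw [v1]
  unfold trPsi
  norm_num

lemma exp_half_lt : Real.exp (1 / 2 : ℝ) < 1.6488 := by
  have a1 : Real.exp (1/2 : ℝ) * Real.exp (1/2 : ℝ) = Real.exp 1 := by
    rw [← Real.exp_add]; norm_num
  nlinarith [Real.exp_pos (1/2 : ℝ), Real.exp_one_lt_d9]

lemma exp_half_gt : (1.64 : ℝ) < Real.exp (1 / 2 : ℝ) := by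
  have a1 : Real.exp (1/2 : ℝ) * Real.exp (1/2 : ℝ) = Real.exp 1 := by
    rw [← Real.exp_add]; norm_num
  nlinarith [Real.exp_pos (1/2 : ℝ), Real.exp_one_gt_d9]

lemma exp_neg_3half_add_exp_half : Real.exp (-(3/2) : ℝ) + Real.exp ((1:ℝ)/2) ≤ 2 := by
  have c1 : Real.exp (-(3/2) : ℝ) * (Real.exp 1 * Real.exp ((1:ℝ)/2)) = 1 := by
    rw [← Real.exp_add, ← Real.exp_add]; norm_num
  have h1 := exp_half_lt
  have h2 := exp_half_gt
  have h3 := Real.exp_one_gt_d9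
  have h4 := Real.exp_pos (-(3/2) : ℝ)
  have hb : (4.45 : ℝ) < Real.exp 1 * Real.exp ((1:ℝ)/2) := by nlinarith
  have hkey := mul_lt_mul_of_pos_left hb h4
  nlinarith

lemma cosh_type (y : ℝ) :
    Real.exp (y - y ^ 2 / 2) + Real.exp (-y - y ^ 2 / 2) ≤ 2 := by
  have h := Real.cosh_le_exp_half_sq y
  rw [Real.cosh_eq] at h
  have hpos := Real.exp_pos (-(y ^ 2 / 2))
  have e1 : Real.exp (y - y ^ 2 / 2) = Real.exp y * Real.exp (-(y ^ 2 / 2)) := by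
    rw [← Real.exp_add]; ring_nf
  have e2 : Real.exp (-y - y ^ 2 / 2) = Real.exp (-y) * Real.exp (-(y ^ 2 / 2)) := by
    rw [← Real.exp_add]; ring_nf
  have e3 : Real.exp (y ^ 2 / 2) * Real.exp (-(y ^ 2 / 2)) = 1 := by
    rw [← Real.exp_add]; simp
  rw [e1, e2]
  nlinarith

lemma key_pointwise (y : ℝ) :
    Real.exp (y - y ^ 2 / 2) - 1 ≤ ∫ u in (0:ℝ)..1, trRho u * truncAt u y := by
  have hrw : ∀ u, trRho u * truncAt u y = (trRho u * min |y| u) * Real.sign y := by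
    intro u; unfold truncAt; ring
  simp_rw [hrw]
  rw [intervalIntegral.integral_mul_const]
  rcases lt_trichotomy y 0 with hy | hy | hy
  · rw [Real.sign_of_neg hy, abs_of_neg hy]
    rcases le_or_gt (-1:ℝ) y with h1 | h1
    · rw [integral_trRho_min_of_le (by linarith) (by linarith)]
      have e : Real.exp (-y - (-y) ^ 2 / 2) = Real.exp (-y - y ^ 2 / 2) := by
        congr 1; ring
      rw [e]
      have := cosh_type y
      linarith
    · rw [integral_trRho_min_of_ge (by linarith)]
      have e : ((1:ℝ) - 1 ^ 2 / 2) = 1/2 := by norm_num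
      rw [e]
      have h2 : Real.exp (y - y ^ 2 / 2) ≤ Real.exp (-(3/2) : ℝ) := by
        apply Real.exp_le_exp.mpr; nlinarith
      have := exp_neg_3half_add_exp_half
      linarith
  · subst hy
    simp [Real.sign_zero]
  · rw [Real.sign_of_pos hy, abs_of_pos hy, mul_one]
    rcases le_or_gt y 1 with h1 | h1
    · rw [integral_trRho_min_of_le hy.le h1]
    · rw [integral_trRho_min_of_ge h1.le]
      have h2 : Real.exp (y - y ^ 2 / 2) ≤ Real.exp ((1:ℝ) - 1 ^ 2 / 2) := by
        apply Real.exp_le_exp.mpr; nlinarith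
      linarith

lemma abs_trRho_le_two (u : ℝ) : |trRho u| ≤ 2 := by
  unfold trRho
  rw [abs_mul, Real.abs_exp]
  have h := Real.add_one_le_exp (u ^ 2 / 2 - u)
  have he := (Real.exp_pos (u - u ^ 2 / 2)).le
  have hmul : Real.exp (u ^ 2 / 2 - u) * Real.exp (u - u ^ 2 / 2) = 1 := by
    rw [← Real.exp_add]
    norm_num
  have habs : |2 * u - u ^ 2| ≤ 2 * Real.exp (u ^ 2 / 2 - u) := by
    rw [abs_le]
    constructor <;> nlinarith [sq_nonneg (u - 1), sq_nonneg (u + 1)]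
  calc |2 * u - u ^ 2| * Real.exp (u - u ^ 2 / 2)
      ≤ 2 * Real.exp (u ^ 2 / 2 - u) * Real.exp (u - u ^ 2 / 2) :=
        mul_le_mul_of_nonneg_right habs he
    _ = 2 := by rw [mul_assoc, hmul, mul_one]

/-- Lemma 3.1 (2): if `X` is integrable and heavy on right, then for all `t ≤ 0`,
`E[exp(t X − (t²/2) X²)] ≤ 1`. -/
theorem heavyOnRight_expectation_exp_le_one
    {Ω : Type*} {m0 : MeasurableSpace Ω} {μ : Measure Ω} [IsProbabilityMeasure μ]
    {X : Ω → ℝ} (hXint : Integrable X μ) (hX : IsHeavyOnRight μ X)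
    {t : ℝ} (ht : t ≤ 0) :
    ∫ ω, Real.exp (t * X ω - t ^ 2 / 2 * (X ω) ^ 2) ∂μ ≤ 1 := by
  rcases ht.lt_or_eq with htlt | rfl
  swap
  · simp
  obtain ⟨-, hHeavy⟩ := hX
  set Y : Ω → ℝ := fun ω => t * X ω with hYdef
  have hYint : Integrable Y μ := hXint.const_mul t
  have hc : 0 < -t := by linarith
  -- Step A: truncation expectations of Y are nonpositive
  have htrunc : ∀ u : ℝ, 0 < u → ∫ ω, truncAt u (Y ω) ∂μ ≤ 0 := by
    intro u hu
    have e1 : ∀ ω, truncAt u (Y ω) = -((-t) * truncAt (u / (-t)) (X ω)) := by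
      intro ω
      show truncAt u (t * X ω) = _
      rw [show t * X ω = -((-t) * X ω) by ring, truncAt_neg, truncAt_const_mul _ _ _ hc]
    simp_rw [e1]
    rw [integral_neg, integral_const_mul]
    have h0 : 0 ≤ ∫ ω, truncAt (u / -t) (X ω) ∂μ := by
      have h := hHeavy (u / -t) (by positivity)
      simp_rw [truncAt_neg] at h
      rw [integral_neg] at h
      linarith
    exact neg_nonpos.mpr (mul_nonneg hc.le h0)
  -- Fubini setup
  set ν : Measure ℝ := volume.restrict (Set.Ioc (0:ℝ) 1) with hνdef
  haveI : IsFiniteMeasure ν := by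
    constructor
    rw [hνdef, Measure.restrict_apply_univ]
    simp [Real.volume_Ioc]
  set g : Ω × ℝ → ℝ := fun p => trRho p.2 * truncAt p.2 (Y p.1) with hgdef
  have hYmeas : AEStronglyMeasurable Y μ := hYint.aestronglyMeasurable
  have hYfst : AEMeasurable (fun p : Ω × ℝ => Y p.1) (μ.prod ν) :=
    hYmeas.comp_fst.aemeasurable
  have hgmeas : AEStronglyMeasurable g (μ.prod ν) := by
    have h1 : AEMeasurable (fun p : Ω × ℝ => trRho p.2) (μ.prod ν) :=
      (continuous_trRho.measurable.comp measurable_snd).aemeasurable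
    have h2 : AEMeasurable (fun p : Ω × ℝ => Real.sign (Y p.1)) (μ.prod ν) :=
      measurable_realSign.comp_aemeasurable hYfst
    have h3 : AEMeasurable (fun p : Ω × ℝ => min |Y p.1| p.2) (μ.prod ν) :=
      (measurable_abs.comp_aemeasurable hYfst).min measurable_snd.aemeasurable
    exact (h1.mul ((h3.mul h2))).aestronglyMeasurable
  have hae : ∀ᵐ p : Ω × ℝ ∂(μ.prod ν), p.2 ∈ Set.Ioc (0:ℝ) 1 := by
    rw [MeasureTheory.ae_iff]
    have hset : {p : Ω × ℝ | ¬ p.2 ∈ Set.Ioc (0:ℝ) 1} = Set.univ ×ˢ (Set.Ioc (0:ℝ) 1)ᶜ := by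
      ext p; simp
    rw [hset, Measure.prod_prod, hνdef, Measure.restrict_apply measurableSet_Ioc.compl]
    simp
  have hboundint : Integrable (fun p : Ω × ℝ => 2 * |Y p.1|) (μ.prod ν) := by
    have := (hYint.abs.const_mul 2).mul_prod (integrable_const (1:ℝ) (μ := ν))
    simpa using this
  have hg_int : Integrable g (μ.prod ν) := by
    apply Integrable.mono' hboundint hgmeas
    filter_upwards [hae] with p hp
    rw [hgdef, Real.norm_eq_abs, abs_mul]
    have h1 : |trRho p.2| ≤ 2 := abs_trRho_le_two p.2
    have h2 : |truncAt p.2 (Y p.1)| ≤ |Y p.1| := abs_truncAt_le _ _ hp.1.le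
    exact mul_le_mul h1 h2 (abs_nonneg _) (by norm_num)
  set G : Ω → ℝ := fun ω => ∫ u, trRho u * truncAt u (Y ω) ∂ν with hGdef
  have hGint : Integrable G μ := hg_int.integral_prod_left
  have hGle : ∫ ω, G ω ∂μ ≤ 0 := by
    rw [hGdef]
    rw [MeasureTheory.integral_integral_swap (f := fun ω u => trRho u * truncAt u (Y ω)) hg_int]
    apply setIntegral_nonpos measurableSet_Ioc
    intro u hu
    rw [integral_const_mul]
    exact mul_nonpos_of_nonneg_of_nonpos (trRho_nonneg hu.1.le (by linarith [hu.2]))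
      (htrunc u hu.1)
  -- pointwise bound
  have hpt : ∀ ω, Real.exp (Y ω - (Y ω) ^ 2 / 2) ≤ 1 + G ω := by
    intro ω
    have h := key_pointwise (Y ω)
    rw [intervalIntegral.integral_of_le (by norm_num : (0:ℝ) ≤ 1)] at h
    have : G ω = ∫ u in Set.Ioc (0:ℝ) 1, trRho u * truncAt u (Y ω) := rfl
    rw [this]
    linarith
  -- integrability of the exponential
  have hexpmeas : AEStronglyMeasurable (fun ω => Real.exp (Y ω - (Y ω) ^ 2 / 2)) μ := by
    have h1 : AEMeasurable Y μ := hYmeas.aemeasurable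
    have h2 : AEMeasurable (fun ω => Y ω - (Y ω) ^ 2 / 2) μ :=
      h1.sub ((h1.pow_const 2).div_const 2)
    exact (Real.measurable_exp.comp_aemeasurable h2).aestronglyMeasurable
  have hfint : Integrable (fun ω => Real.exp (Y ω - (Y ω) ^ 2 / 2)) μ := by
    apply Integrable.mono' (integrable_const (Real.exp ((1:ℝ)/2))) hexpmeas
    filter_upwards with ω
    rw [Real.norm_eq_abs, Real.abs_exp]
    apply Real.exp_le_exp.mpr
    nlinarith [sq_nonneg (Y ω - 1)]
  have hrw : ∀ ω, t * X ω - t ^ 2 / 2 * (X ω) ^ 2 = Y ω - (Y ω) ^ 2 / 2 := by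
    intro ω; rw [hYdef]; ring
  calc ∫ ω, Real.exp (t * X ω - t ^ 2 / 2 * (X ω) ^ 2) ∂μ
      = ∫ ω, Real.exp (Y ω - (Y ω) ^ 2 / 2) ∂μ := by simp_rw [hrw]
    _ ≤ ∫ ω, (1 + G ω) ∂μ :=
        integral_mono hfint ((integrable_const 1).add hGint) hpt
    _ = 1 + ∫ ω, G ω ∂μ := by
        rw [integral_add (integrable_const 1) hGint, integral_const, probReal_univ]
        simp
    _ ≤ 1 := by linarith
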